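/- For all x, y in [-R, R], the expectation E_{(w,b)}[1_{wx+b>0} · 1_{wy+b>0}], where w is uniform on {-1,1} and b is uniform on [-R,R], equals 1/2 - |x-y|/(4R). -/

import Mathlib

open MeasureTheory intervalIntegral

/-- Truncated power `(u)_+^α`, with the convention `(u)_+^0 = 1_{u>0}`. -/
noncomputable def truncPow (α : ℕ) (u : ℝ) : ℝ := if 0 < u then u ^ α else 0

lemma indicator_integral (R m : ℝ) (hm : m ∈ Set.Icc (-R) R) :
    (∫ b in (-R)..R, (if m < b then (1:ℝ) else 0)) = R - m := by
  obtain ⟨h1, h2⟩ := hm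
  have hle : (-R : ℝ) ≤ R := le_trans h1 h2
  have hfun : (fun b : ℝ => if m < b then (1:ℝ) else 0)
      = Set.indicator (Set.Ioi m) (fun _ => (1:ℝ)) := by
    ext b; simp [Set.indicator, Set.mem_Ioi]
  rw [intervalIntegral.integral_of_le hle, hfun,
    MeasureTheory.integral_indicator measurableSet_Ioi]
  rw [MeasureTheory.setIntegral_const, measureReal_def, Measure.restrict_apply measurableSet_Ioi]
  have hset : Set.Ioi m ∩ Set.Ioc (-R) R = Set.Ioc m R := by
    ext b
    simp only [Set.mem_inter_iff, Set.mem_Ioi, Set.mem_Ioc]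
    constructor
    · rintro ⟨hb, _, hb2⟩; exact ⟨hb, hb2⟩
    · rintro ⟨hb, hb2⟩; exact ⟨hb, lt_of_le_of_lt h1 hb, hb2⟩
  rw [hset, Real.volume_Ioc, ENNReal.toReal_ofReal (by linarith)]
  simp

/-- For `x, y ∈ [-R, R]`, with `w` uniform on `{-1, 1}` and `b` uniform on `[-R, R]`
independent, `E[1_{wx+b>0} · 1_{wy+b>0}] = 1/2 - |x - y|/(4R)`. -/
theorem stmt0 (R x y : ℝ) (hR : 0 < R) (hx : x ∈ Set.Icc (-R) R) (hy : y ∈ Set.Icc (-R) R) :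
    (1 / 2) * ((1 / (2 * R)) * ∫ b in (-R)..R, truncPow 0 (x + b) * truncPow 0 (y + b))
      + (1 / 2) * ((1 / (2 * R)) * ∫ b in (-R)..R, truncPow 0 (-x + b) * truncPow 0 (-y + b))
    = 1 / 2 - |x - y| / (4 * R) := by
  obtain ⟨hx1, hx2⟩ := hx
  obtain ⟨hy1, hy2⟩ := hy
  have key : ∀ a c : ℝ, ∀ b : ℝ, truncPow 0 (a + b) * truncPow 0 (c + b)
      = if max (-a) (-c) < b then (1:ℝ) else 0 := by
    intro a c b
    have ha : -a < b ↔ 0 < a + b := ⟨fun h => by linarith, fun h => by linarith⟩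
    have hc : -c < b ↔ 0 < c + b := ⟨fun h => by linarith, fun h => by linarith⟩
    simp only [truncPow, pow_zero, max_lt_iff, ha, hc, ite_and, ite_mul, one_mul, zero_mul]
  have e1 : (∫ b in (-R)..R, truncPow 0 (x + b) * truncPow 0 (y + b))
      = R - max (-x) (-y) := by
    rw [show (fun b => truncPow 0 (x + b) * truncPow 0 (y + b))
        = fun b => if max (-x) (-y) < b then (1:ℝ) else 0 from funext (key x y)]
    exact indicator_integral R _ ⟨by simp [le_max_iff]; left; linarith,
      by simp [max_le_iff]; constructor <;> linarith⟩
  have e2 : (∫ b in (-R)..R, truncPow 0 (-x + b) * truncPow 0 (-y + b))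
      = R - max x y := by
    rw [show (fun b => truncPow 0 (-x + b) * truncPow 0 (-y + b))
        = fun b => if max x y < b then (1:ℝ) else 0 from funext (by
          intro b; rw [key (-x) (-y) b]; simp)]
    exact indicator_integral R _ ⟨by simp [le_max_iff]; left; linarith,
      by simp [max_le_iff]; constructor <;> linarith⟩
  rw [e1, e2]
  have hmm : max x y - min x y = |x - y| := by
    rw [abs_sub_comm]; exact max_sub_min_eq_abs x y
  have hmax : max (-x) (-y) = -min x y := by
    rcases le_total x y with h | h <;> simp [max_def, min_def, h]
  have hmin : min x y = max x y - |x - y| := by linarith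
  rw [hmax, hmin]
  field_simp
  ring
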